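/- Let R be a commutative ring, S a multiplicative subset of R, and A, B R-modules. If the direct sum A ⊕ B is u-S-pseudo-projective, then both A and B are u-S-pseudo-projective. -/

import Mathlib

/-!  Definitions for uniformly-S-pseudo-projective modules
(M. Adarbeh, M. Saleh, "Uniformly-S-pseudo-projective modules"). -/

universe u v w

/-- `S` is a multiplicative subset of the commutative ring `R`:
`1 ∈ S`, `0 ∉ S`, and `S` is closed under multiplication. -/
def IsMultSubset {R : Type u} [CommRing R] (S : Set R) : Prop :=
  1 ∈ S ∧ (0 : R) ∉ S ∧ ∀ ⦃a b : R⦄, a ∈ S → b ∈ S → a * b ∈ S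

/-- An `R`-module `T` is `u`-`S`-torsion if some `s ∈ S` annihilates it. -/
def IsUSTorsion {R : Type u} [CommRing R] (S : Set R) (T : Type v) [AddCommGroup T]
    [Module R T] : Prop :=
  ∃ s ∈ S, ∀ t : T, s • t = 0

/-- `f` is a `u`-`S`-monomorphism: its kernel is `u`-`S`-torsion. -/
def IsUSMono {R : Type u} [CommRing R] (S : Set R) {M : Type v} {N : Type w}
    [AddCommGroup M] [Module R M] [AddCommGroup N] [Module R N] (f : M →ₗ[R] N) : Prop :=
  ∃ s ∈ S, ∀ m ∈ LinearMap.ker f, s • m = (0 : M)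

/-- `f` is a `u`-`S`-epimorphism: its cokernel is `u`-`S`-torsion. -/
def IsUSEpi {R : Type u} [CommRing R] (S : Set R) {M : Type v} {N : Type w}
    [AddCommGroup M] [Module R M] [AddCommGroup N] [Module R N] (f : M →ₗ[R] N) : Prop :=
  ∃ s ∈ S, ∀ n : N, s • n ∈ LinearMap.range f

/-- `f` is a `u`-`S`-isomorphism: both a `u`-`S`-monomorphism and a `u`-`S`-epimorphism. -/
def IsUSIso {R : Type u} [CommRing R] (S : Set R) {M : Type v} {N : Type w}
    [AddCommGroup M] [Module R M] [AddCommGroup N] [Module R N] (f : M →ₗ[R] N) : Prop :=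
  IsUSMono S f ∧ IsUSEpi S f

/-- `P` is `u`-`S`-pseudo-projective: for every submodule `K` of `P` there is `s ∈ S` such that
every `u`-`S`-epimorphism `f : P → P/K` satisfies `s • f = π_K ∘ g` for some endomorphism
`g` of `P`. -/
def IsUSPseudoProjective {R : Type u} [CommRing R] (S : Set R) (P : Type v)
    [AddCommGroup P] [Module R P] : Prop :=
  ∀ K : Submodule R P, ∃ s ∈ S, ∀ f : P →ₗ[R] P ⧸ K, IsUSEpi S f →
    ∃ g : P →ₗ[R] P, s • f = K.mkQ.comp g

/-- `M` is `u`-`S`-quasi-projective. -/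
def IsUSQuasiProjective {R : Type u} [CommRing R] (S : Set R) (M : Type v)
    [AddCommGroup M] [Module R M] : Prop :=
  ∀ K : Submodule R M, ∃ s ∈ S, ∀ f : M →ₗ[R] M ⧸ K,
    ∃ g : M →ₗ[R] M, s • f = K.mkQ.comp g

/-- `Q` is `u`-`S`-projective (test modules in `Type v₁`). -/
def IsUSProjective.{u₁, v₁, w₁} {R : Type u₁} [CommRing R] (S : Set R) (Q : Type w₁)
    [AddCommGroup Q] [Module R Q] : Prop :=
  ∀ (B C : Type v₁) [AddCommGroup B] [AddCommGroup C] [Module R B] [Module R C]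
    (g : B →ₗ[R] C), IsUSEpi S g →
      ∃ s ∈ S, ∀ h : Q →ₗ[R] C, ∃ h' : Q →ₗ[R] B, s • h = g.comp h'

/-- `M` is `u`-`S`-injective (test modules in `Type v₁`). -/
def IsUSInjective.{u₁, v₁, w₁} {R : Type u₁} [CommRing R] (S : Set R) (M : Type w₁)
    [AddCommGroup M] [Module R M] : Prop :=
  ∀ (A B : Type v₁) [AddCommGroup A] [AddCommGroup B] [Module R A] [Module R B]
    (f : A →ₗ[R] B), IsUSMono S f →
      ∃ s ∈ S, ∀ h : A →ₗ[R] M, ∃ h' : B →ₗ[R] M, s • h = h'.comp f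

/-- `E` is `u`-`S`-pseudo-injective. -/
def IsUSPseudoInjective {R : Type u} [CommRing R] (S : Set R) (E : Type v)
    [AddCommGroup E] [Module R E] : Prop :=
  ∀ K : Submodule R E, ∃ s ∈ S, ∀ f : ↥K →ₗ[R] E, IsUSMono S f →
    ∃ g : E →ₗ[R] E, g.comp K.subtype = s • f

/-- The sequence `0 → A →f B →g C → 0` is short `u`-`S`-exact. -/
def IsShortUSExact {R : Type u} [CommRing R] (S : Set R) {A B C : Type v}
    [AddCommGroup A] [Module R A] [AddCommGroup B] [Module R B] [AddCommGroup C] [Module R C]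
    (f : A →ₗ[R] B) (g : B →ₗ[R] C) : Prop :=
  IsUSMono S f ∧ IsUSEpi S g ∧
    ∃ s ∈ S, (∀ x ∈ LinearMap.ker g, s • x ∈ LinearMap.range f) ∧
      (∀ x ∈ LinearMap.range f, s • x ∈ LinearMap.ker g)

/-- The short `u`-`S`-exact sequence `0 → A →f B →g C → 0` is `u`-`S`-split:
some multiple `s • 1_A` of the identity factors back through `f`. -/
def IsUSSplitSeq {R : Type u} [CommRing R] (S : Set R) {A B : Type v}
    [AddCommGroup A] [Module R A] [AddCommGroup B] [Module R B] (f : A →ₗ[R] B) : Prop :=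
  ∃ s ∈ S, ∃ f' : B →ₗ[R] A, f'.comp f = s • (LinearMap.id : A →ₗ[R] A)

/-- `M` is a `u`-`S`-semisimple module (test sequences with modules in `Type v₁`). -/
def IsUSSemisimpleModule.{u₁, v₁} {R : Type u₁} [CommRing R] (S : Set R) (M : Type v₁)
    [AddCommGroup M] [Module R M] : Prop :=
  ∀ (A C : Type v₁) [AddCommGroup A] [AddCommGroup C] [Module R A] [Module R C]
    (f : A →ₗ[R] M) (g : M →ₗ[R] C), IsShortUSExact S f g → IsUSSplitSeq S f

/-- `R` is a `u`-`S`-semisimple ring: every free `R`-module is `u`-`S`-semisimple. -/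
def IsUSSemisimpleRing.{u₁, v₁} {R : Type u₁} [CommRing R] (S : Set R) : Prop :=
  ∀ (F : Type v₁) [AddCommGroup F] [Module R F], Module.Free R F →
    IsUSSemisimpleModule.{u₁, v₁} S F

/-- A submodule `N` of `M` is a `u`-`S`-direct summand of `M` if there is an `R`-module `N'`
and a `u`-`S`-isomorphism between `M` and `N ⊕ N'`. -/
def IsUSDirectSummand {R : Type u} [CommRing R] (S : Set R) {M : Type v}
    [AddCommGroup M] [Module R M] (N : Submodule R M) : Prop :=
  ∃ (N' : ModuleCat.{v} R) (h : M →ₗ[R] (↥N × ↥N')), IsUSIso S h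

/-- `A` is `u`-`S`-projective relative to `B`. -/
def IsUSProjectiveRel {R : Type u} [CommRing R] (S : Set R) (A : Type v) (B : Type w)
    [AddCommGroup A] [Module R A] [AddCommGroup B] [Module R B] : Prop :=
  ∀ K : Submodule R B, ∃ s ∈ S, ∀ f : A →ₗ[R] B ⧸ K,
    ∃ h : A →ₗ[R] B, s • f = K.mkQ.comp h


/-- `u`-`S`-pseudo-projectivity passes to retracts. -/
theorem isUSPseudoProjective_of_retract
    {R : Type u} [CommRing R] (S : Set R)
    {M : Type v} {A : Type v} [AddCommGroup M] [Module R M] [AddCommGroup A] [Module R A]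
    (i : A →ₗ[R] M) (p : M →ₗ[R] A) (hpi : p.comp i = LinearMap.id)
    (hM : IsUSPseudoProjective S M) : IsUSPseudoProjective S A := by
  have hpi' : ∀ a : A, p (i a) = a := fun a => by
    have := congrArg (fun h : A →ₗ[R] A => h a) hpi; simpa using this
  intro K
  set K' : Submodule R M := K.comap p with hK'def
  obtain ⟨s, hs, hK'⟩ := hM K'
  refine ⟨s, hs, ?_⟩
  intro f hf
  -- the induced maps between quotients
  have hφ : K ≤ LinearMap.ker (K'.mkQ.comp i) := by
    intro x hx
    simp only [LinearMap.mem_ker, LinearMap.comp_apply, Submodule.mkQ_apply,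
      Submodule.Quotient.mk_eq_zero, hK'def, Submodule.mem_comap, hpi']
    exact hx
  set φ : (A ⧸ K) →ₗ[R] (M ⧸ K') := K.liftQ (K'.mkQ.comp i) hφ with hφdef
  have hψ : K' ≤ LinearMap.ker (K.mkQ.comp p) := by
    intro x hx
    simpa only [LinearMap.mem_ker, LinearMap.comp_apply, Submodule.mkQ_apply,
      Submodule.Quotient.mk_eq_zero, hK'def, Submodule.mem_comap] using hx
  set ψ : (M ⧸ K') →ₗ[R] (A ⧸ K) := K'.liftQ (K.mkQ.comp p) hψ with hψdef
  have hψφ : ∀ z : A ⧸ K, ψ (φ z) = z := by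
    intro z
    obtain ⟨a, rfl⟩ := K.mkQ_surjective z
    simp [hφdef, hψdef, hpi']
  set f' : M →ₗ[R] M ⧸ K' := φ.comp (f.comp p) with hf'def
  have key : ∀ m : M, f' m = φ (f (p m)) := fun m => rfl
  have hmk : ∀ m : M, (K'.mkQ) m = φ (K.mkQ (p m)) := by
    intro m
    have hmem : m - i (p m) ∈ K' := by
      simp [hK'def, Submodule.mem_comap, hpi']
    have : (K'.mkQ) (m - i (p m)) = 0 := by
      rw [Submodule.mkQ_apply, Submodule.Quotient.mk_eq_zero]; exact hmem
    have h2 : (K'.mkQ) m = (K'.mkQ) (i (p m)) := by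
      have := sub_eq_zero.mp (by simpa [map_sub] using this)
      exact this
    simpa [hφdef] using h2
  have hf' : IsUSEpi S f' := by
    obtain ⟨t, ht, hte⟩ := hf
    refine ⟨t, ht, ?_⟩
    intro z
    obtain ⟨m, rfl⟩ := K'.mkQ_surjective z
    obtain ⟨x, hx⟩ := hte (K.mkQ (p m))
    refine ⟨i x, ?_⟩
    have : f' (i x) = φ (f x) := by simp [key, hpi']
    rw [this, hx, map_smul, ← hmk m]
  obtain ⟨g, hg⟩ := hK' f' hf'
  refine ⟨p.comp (g.comp i), ?_⟩
  ext a
  have h1 : s • f' (i a) = (K'.mkQ) (g (i a)) := by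
    have := congrArg (fun h : M →ₗ[R] M ⧸ K' => h (i a)) hg
    simpa using this
  have h2 : f' (i a) = φ (f a) := by simp [key, hpi']
  have h3 : ψ (s • f' (i a)) = s • f a := by
    rw [h2, ← map_smul, ← map_smul, hψφ]
  have h4 : ψ ((K'.mkQ) (g (i a))) = K.mkQ (p (g (i a))) := by
    simp [hψdef]
  simp only [LinearMap.smul_apply, LinearMap.comp_apply, Submodule.mkQ_apply]
  rw [← h3, h1, h4]
  simp

/-- If `A ⊕ B` is `u`-`S`-pseudo-projective, then so are `A` and `B`. -/
theorem uSPseudoProjective_of_prod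
    {R : Type u} [CommRing R] (S : Set R) (hS : IsMultSubset S)
    {A : Type v} {B : Type v} [AddCommGroup A] [Module R A] [AddCommGroup B] [Module R B]
    (hAB : IsUSPseudoProjective S (A × B)) :
    IsUSPseudoProjective S A ∧ IsUSPseudoProjective S B := by
  constructor
  · exact isUSPseudoProjective_of_retract S (LinearMap.inl R A B) (LinearMap.fst R A B)
      (by ext a <;> rfl) hAB
  · exact isUSPseudoProjective_of_retract S (LinearMap.inr R A B) (LinearMap.snd R A B)
      (by ext b <;> rfl) hAB
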